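/- Suppose every continuous curve f : [0,1] → E is Lebesgue–Pettis integrable. If g : [0,1] → E is continuous and σ is a non-atomic Borel probability measure on [0,1] with full support, then the pushforward measure μ = σ ∘ g⁻¹ has a barycenter in E, namely the Pettis integral ∫₀¹ g(F⁻¹(t)) dt where F is the distribution function of σ. -/

import Mathlib

open MeasureTheory Set

variable {E : Type*} [AddCommGroup E] [Module ℝ E] [TopologicalSpace E]
  [IsTopologicalAddGroup E] [ContinuousSMul ℝ E] [LocallyConvexSpace ℝ E] [T2Space E]
  [MeasurableSpace E] [BorelSpace E]

def IsBarycenter (μ : Measure E) (r : E) : Prop :=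
  ∀ e' : E →L[ℝ] ℝ, Integrable (fun y => e' y) μ ∧ e' r = ∫ y, e' y ∂μ

def IsPettisIntegral {X : Type*} [MeasurableSpace X] (ν : Measure X) (f : X → E) (v : E) : Prop :=
  ∀ e' : E →L[ℝ] ℝ, Integrable (fun x => e' (f x)) ν ∧ e' v = ∫ x, e' (f x) ∂ν

theorem stmt5
    (hPettis : ∀ f : Icc (0:ℝ) 1 → E, Continuous f → ∃ v, IsPettisIntegral volume f v)
    (g : Icc (0:ℝ) 1 → E) (hg : Continuous g)
    (σ : Measure (Icc (0:ℝ) 1)) [IsProbabilityMeasure σ]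
    (hna : ∀ x, σ {x} = 0)
    (hfull : ∀ U : Set (Icc (0:ℝ) 1), IsOpen U → U.Nonempty → 0 < σ U) :
    let F : Icc (0:ℝ) 1 → ℝ := fun t => (σ {s | (s:ℝ) ∈ Ioc (0:ℝ) (t:ℝ)}).toReal
    ∃ r : E, IsBarycenter (σ.map g) r ∧
      ∀ G : Icc (0:ℝ) 1 → Icc (0:ℝ) 1,
        (∀ t : Icc (0:ℝ) 1, F (G t) = (t:ℝ)) → IsPettisIntegral volume (g ∘ G) r := by
  intro F
  set S : Icc (0:ℝ) 1 → Set (Icc (0:ℝ) 1) := fun a => {s | (s:ℝ) ∈ Ioc (0:ℝ) (a:ℝ)} with hS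
  have hSmeas : ∀ a, MeasurableSet (S a) := fun a =>
    measurable_subtype_coe measurableSet_Ioc
  have hF : F = fun t => (σ (S t)).toReal := rfl
  have hne : ∀ a, σ (S a) ≠ ⊤ := fun a => measure_ne_top σ _
  have hofReal : ∀ a, ENNReal.ofReal (F a) = σ (S a) := fun a => ENNReal.ofReal_toReal (hne a)
  -- F is strictly monotone
  have hFmono : StrictMono F := by
    intro a b hab
    have hsub : S a ⊆ S b := fun s hs => ⟨hs.1, hs.2.trans (Subtype.coe_le_coe.2 hab.le)⟩
    have hmid : ((a:ℝ) + b) / 2 ∈ Icc (0:ℝ) 1 := by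
      constructor
      · linarith [a.2.1, b.2.1]
      · linarith [a.2.2, b.2.2]
    have hab' : (a:ℝ) < b := hab
    have hopen : IsOpen ((fun s : Icc (0:ℝ) 1 => (s:ℝ)) ⁻¹' Ioo (a:ℝ) (b:ℝ)) :=
      isOpen_Ioo.preimage continuous_subtype_val
    have hposset : 0 < σ ((fun s : Icc (0:ℝ) 1 => (s:ℝ)) ⁻¹' Ioo (a:ℝ) (b:ℝ)) := by
      refine hfull _ hopen ⟨⟨_, hmid⟩, ?_, ?_⟩ <;> simp <;> linarith
    have hsub2 : ((fun s : Icc (0:ℝ) 1 => (s:ℝ)) ⁻¹' Ioo (a:ℝ) (b:ℝ)) ⊆ S b \ S a := by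
      intro s hs
      exact ⟨⟨lt_of_le_of_lt a.2.1 hs.1, hs.2.le⟩, fun h => absurd h.2 (not_le.2 hs.1)⟩
    have hlt : σ (S a) < σ (S b) := by
      calc σ (S a) < σ (S a) + σ ((fun s : Icc (0:ℝ) 1 => (s:ℝ)) ⁻¹' Ioo (a:ℝ) (b:ℝ)) :=
            ENNReal.lt_add_right (hne a) hposset.ne'
        _ ≤ σ (S a) + σ (S b \ S a) := add_le_add_right (measure_mono hsub2) _
        _ = σ (S a ∪ (S b \ S a)) := (measure_union' disjoint_sdiff_right (hSmeas a)).symm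
        _ = σ (S b) := by rw [union_diff_cancel hsub]
    exact (ENNReal.toReal_lt_toReal (hne a) (hne b)).2 hlt
  have hzero : ∀ s : Icc (0:ℝ) 1, (s:ℝ) = 0 → s = ⟨0, le_refl 0, zero_le_one⟩ :=
    fun s hs => Subtype.ext hs
  have hIic : ∀ a : Icc (0:ℝ) 1, σ (Iic a) = σ (S a) := by
    intro a
    refine le_antisymm ?_ (measure_mono fun s hs => Subtype.coe_le_coe.1 hs.2)
    have hsub : Iic a ⊆ S a ∪ {⟨0, le_refl 0, zero_le_one⟩} := by
      intro s hs
      rcases eq_or_lt_of_le s.2.1 with h | h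
      · exact Or.inr (by simpa using (hzero s h.symm))
      · exact Or.inl ⟨h, Subtype.coe_le_coe.2 hs⟩
    calc σ (Iic a) ≤ σ (S a ∪ {⟨0, le_refl 0, zero_le_one⟩}) := measure_mono hsub
      _ ≤ σ (S a) + σ {⟨0, le_refl 0, zero_le_one⟩} := measure_union_le _ _
      _ = σ (S a) := by rw [hna, add_zero]
  -- the pushforward to ℝ and continuity of F via the CDF
  set ν : Measure ℝ := σ.map Subtype.val with hνdef
  haveI : IsProbabilityMeasure ν :=
    Measure.isProbabilityMeasure_map measurable_subtype_coe.aemeasurable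
  have hνIic : ∀ t : Icc (0:ℝ) 1, ν (Iic (t:ℝ)) = σ (S t) := by
    intro t
    rw [hνdef, Measure.map_apply measurable_subtype_coe measurableSet_Iic]
    have : (Subtype.val ⁻¹' Iic (t:ℝ) : Set (Icc (0:ℝ) 1)) = Iic t := rfl
    rw [this, hIic]
  have hν_atom : ∀ x : ℝ, ν {x} = 0 := by
    intro x
    rw [hνdef, Measure.map_apply measurable_subtype_coe (measurableSet_singleton x)]
    by_cases hx : x ∈ Icc (0:ℝ) 1
    · have : (Subtype.val ⁻¹' {x} : Set (Icc (0:ℝ) 1)) = {⟨x, hx⟩} := by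
        ext s; simp [Subtype.ext_iff]
      rw [this]; exact hna _
    · have : (Subtype.val ⁻¹' {x} : Set (Icc (0:ℝ) 1)) = ∅ := by
        ext s; simp only [mem_preimage, mem_singleton_iff, mem_empty_iff_false, iff_false]
        rintro rfl; exact hx s.2
      rw [this]; exact measure_empty
  have hcdf_cont : Continuous (ProbabilityTheory.cdf ν) := by
    rw [continuous_iff_continuousAt]
    intro x
    have hmono := (ProbabilityTheory.cdf ν).mono
    rw [hmono.continuousAt_iff_leftLim_eq_rightLim]
    have hright : Function.rightLim (ProbabilityTheory.cdf ν) x = ProbabilityTheory.cdf ν x := by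
      rw [← hmono.continuousWithinAt_Ioi_iff_rightLim_eq]
      exact ((ProbabilityTheory.cdf ν).right_continuous x).mono Ioi_subset_Ici_self
    have hleft : Function.leftLim (ProbabilityTheory.cdf ν) x = ProbabilityTheory.cdf ν x := by
      have h0 : (ProbabilityTheory.cdf ν).measure {x} = 0 := by
        rw [ProbabilityTheory.measure_cdf]; exact hν_atom x
      rw [StieltjesFunction.measure_singleton] at h0
      have hle := hmono.leftLim_le (le_refl x)
      have := ENNReal.ofReal_eq_zero.1 h0
      linarith
    rw [hleft, hright]
  have hF_cdf : ∀ t : Icc (0:ℝ) 1, F t = ProbabilityTheory.cdf ν (t:ℝ) := by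
    intro t
    rw [hF, ProbabilityTheory.cdf_eq_real, measureReal_def, hνIic]
  have hFcont : Continuous F := by
    have : F = (ProbabilityTheory.cdf ν) ∘ Subtype.val := funext hF_cdf
    rw [this]; exact hcdf_cont.comp continuous_subtype_val
  have hF0 : F ⟨0, le_refl 0, zero_le_one⟩ = 0 := by
    have h : S ⟨0, le_refl 0, zero_le_one⟩ = ∅ := by
      ext s
      simp only [hS, mem_setOf_eq, mem_Ioc, mem_empty_iff_false, iff_false, not_and, not_le]
      exact fun h => h
    rw [hF]
    simp only
    rw [h, measure_empty, ENNReal.toReal_zero]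
  have hσS1 : σ (S ⟨1, zero_le_one, le_refl 1⟩) = 1 := by
    have h1 : σ (Iic ⟨1, zero_le_one, le_refl 1⟩) = 1 := by
      have : (Iic ⟨1, zero_le_one, le_refl 1⟩ : Set (Icc (0:ℝ) 1)) = univ := by
        ext s; simp [Subtype.coe_le_coe.symm]; exact s.2.2
      rw [this, measure_univ]
    rw [← h1, hIic]
  have hF1 : F ⟨1, zero_le_one, le_refl 1⟩ = 1 := by
    rw [hF]; simp only; rw [hσS1, ENNReal.toReal_one]
  have hFmem : ∀ t, F t ∈ Icc (0:ℝ) 1 := by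
    intro t
    refine ⟨ENNReal.toReal_nonneg, ?_⟩
    rw [hF]
    exact ENNReal.toReal_le_of_le_ofReal zero_le_one (by simpa using prob_le_one)
  -- the induced self-map of the interval is a homeomorphism
  set F' : Icc (0:ℝ) 1 → Icc (0:ℝ) 1 := fun t => ⟨F t, hFmem t⟩ with hF'
  have hF'cont : Continuous F' := hFcont.subtype_mk _
  have hF'inj : Function.Injective F' := fun a b hab =>
    hFmono.injective (congrArg (Subtype.val : Icc (0:ℝ) 1 → ℝ) hab)
  have hF'surj : Function.Surjective F' := by
    intro y
    have hsub : Icc (F ⟨0, le_refl 0, zero_le_one⟩) (F ⟨1, zero_le_one, le_refl 1⟩) ⊆ range F :=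
      intermediate_value_univ _ _ hFcont
    rw [hF0, hF1] at hsub
    obtain ⟨t, ht⟩ := hsub y.2
    exact ⟨t, Subtype.ext ht⟩
  have hG0 : ∃ G0 : Icc (0:ℝ) 1 → Icc (0:ℝ) 1, Continuous G0 ∧ ∀ t, F (G0 t) = (t:ℝ) := by
    let e : Icc (0:ℝ) 1 ≃ Icc (0:ℝ) 1 := Equiv.ofBijective F' ⟨hF'inj, hF'surj⟩
    let h : Icc (0:ℝ) 1 ≃ₜ Icc (0:ℝ) 1 := Continuous.homeoOfEquivCompactToT2 (f := e) hF'cont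
    refine ⟨h.symm, h.symm.continuous, fun t => ?_⟩
    have := h.apply_symm_apply t
    exact congrArg Subtype.val this
  obtain ⟨G0, hG0cont, hFG0⟩ := hG0
  have hGmeas : ∀ G : Icc (0:ℝ) 1 → Icc (0:ℝ) 1, (∀ t, F (G t) = (t:ℝ)) → Measurable G := by
    intro G hG
    have hGmono : StrictMono G := by
      intro a b hab
      by_contra h
      have : F (G b) ≤ F (G a) := hFmono.monotone (not_lt.1 h)
      rw [hG a, hG b] at this
      exact absurd (Subtype.coe_le_coe.1 this) (not_le.2 hab)
    exact hGmono.monotone.measurable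
  -- any right inverse of F pushes Lebesgue measure forward to σ
  have hmap : ∀ G : Icc (0:ℝ) 1 → Icc (0:ℝ) 1, (∀ t, F (G t) = (t:ℝ)) →
      Measure.map G volume = σ := by
    intro G hG
    have hGmeas : Measurable G := hGmeas G hG
    haveI : IsProbabilityMeasure (Measure.map G volume) :=
      Measure.isProbabilityMeasure_map hGmeas.aemeasurable
    refine Measure.ext_of_Iic (Measure.map G volume) σ (fun a => ?_)
    rw [Measure.map_apply hGmeas measurableSet_Iic]
    have hpre : G ⁻¹' Iic a = Iic (F' a) := by
      ext t
      simp only [mem_preimage, mem_Iic]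
      constructor
      · intro h
        have := hFmono.monotone h
        rw [hG t] at this
        exact Subtype.coe_le_coe.1 this
      · intro h
        have h2 : F (G t) ≤ F a := by rw [hG t]; exact h
        exact (hFmono.le_iff_le).1 h2
    rw [hpre]
    have hvol : (volume : Measure (Icc (0:ℝ) 1)) = Measure.comap Subtype.val volume := rfl
    have himg : (Subtype.val '' (Iic (F' a)) : Set ℝ) = Icc 0 (F a) := by
      ext x
      constructor
      · rintro ⟨s, hs, rfl⟩
        exact ⟨s.2.1, hs⟩
      · rintro ⟨hx0, hx1⟩
        exact ⟨⟨x, hx0, hx1.trans (hFmem a).2⟩, hx1, rfl⟩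
    rw [hvol, Measure.comap_apply Subtype.val Subtype.val_injective
      (fun s hs => (MeasurableEmbedding.subtype_coe measurableSet_Icc).measurableSet_image.2 hs)
      volume measurableSet_Iic, himg, Real.volume_Icc, sub_zero, hofReal, ← hIic a]
  -- integrability of test functions against σ
  have hIntσ : ∀ e' : E →L[ℝ] ℝ, Integrable (fun x => e' (g x)) σ := by
    intro e'
    exact (e'.continuous.comp hg).integrable_of_hasCompactSupport
      (HasCompactSupport.of_compactSpace _)
  -- for any right inverse G of F, integrals with respect to volume compute σ-integrals
  have key : ∀ (G : Icc (0:ℝ) 1 → Icc (0:ℝ) 1), (∀ t, F (G t) = (t:ℝ)) →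
      ∀ e' : E →L[ℝ] ℝ, Integrable (fun t => e' (g (G t))) volume ∧
        ∫ t, e' (g (G t)) ∂(volume : Measure (Icc (0:ℝ) 1)) = ∫ x, e' (g x) ∂σ := by
    intro G hG e'
    have hφ : Continuous fun x => e' (g x) := e'.continuous.comp hg
    have hmapG := hmap G hG
    have hGm := hGmeas G hG
    constructor
    · have h1 : Integrable (fun x => e' (g x)) (Measure.map G volume) := by
        rw [hmapG]; exact hIntσ e'
      exact (integrable_map_measure hφ.aestronglyMeasurable hGm.aemeasurable).1 h1
    · have h2 := integral_map (μ := (volume : Measure (Icc (0:ℝ) 1)))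
        (f := fun x => e' (g x)) hGm.aemeasurable hφ.aestronglyMeasurable
      rw [hmapG] at h2
      exact h2.symm
  -- the Pettis integral along the canonical right inverse
  obtain ⟨v, hv⟩ := hPettis (g ∘ G0) (hg.comp hG0cont)
  have hv' : ∀ e' : E →L[ℝ] ℝ, e' v = ∫ x, e' (g x) ∂σ := by
    intro e'
    rw [(hv e').2]
    exact (key G0 hFG0 e').2
  refine ⟨v, ?_, ?_⟩
  · intro e'
    constructor
    · exact (integrable_map_measure e'.continuous.aestronglyMeasurable
        hg.measurable.aemeasurable).2 (hIntσ e')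
    · rw [integral_map hg.measurable.aemeasurable e'.continuous.aestronglyMeasurable]
      exact hv' e'
  · intro G hG e'
    refine ⟨(key G hG e').1, ?_⟩
    rw [hv' e']
    exact ((key G hG e').2).symm
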